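/- Let G be a simple graph on n vertices with adjacency matrix A_G, and H a graph on c vertices with adjacency matrix A_H satisfying A_H·𝟙 = μ·𝟙. Let N = A_G ⊗ J_c + I_n ⊗ A_H be the adjacency matrix of the lexicographic product G[H], where J_c is the c×c all-ones matrix. Fix a vertex a of G and x, y ∈ ℝ^c with 𝟙ᵀx = 𝟙ᵀy = 0. If exp(i·τ·A_H)·x = γ·y for some τ > 0 and γ ∈ ℂ with |γ| = 1, then exp(i·τ·N)·(e_a ⊗ x) = γ·(e_a ⊗ y), where (e_a ⊗ x)(j,u) = x_u if j = a and 0 otherwise. In particular, pair PST in H between pair states orthogonal to 𝟙 yields pair PST in G[H] at the same time. -/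

import Mathlib

open Matrix Kronecker

/-- The transition matrix `U_R(t) = exp(i·t·R)` of a real square matrix `R`,
as a complex matrix. -/
noncomputable def U {ι : Type*} [Fintype ι] [DecidableEq ι]
    (R : Matrix ι ι ℝ) (t : ℝ) : Matrix ι ι ℂ :=
  NormedSpace.exp ((Complex.I * (t : ℂ)) • R.map (Complex.ofReal ·))

section Aux

variable {ι : Type*} [Fintype ι] [DecidableEq ι]

attribute [local instance] Matrix.linftyOpNormedRing Matrix.linftyOpNormedAlgebra

/-- `exp` of a matrix applied to a vector is the tsum of the series applied to the vector. -/
lemma exp_mulVec (M : Matrix ι ι ℂ) (w : ι → ℂ) :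
    NormedSpace.exp M *ᵥ w = ∑' k : ℕ, ((k.factorial : ℂ)⁻¹ • (M ^ k)) *ᵥ w := by
  have hL : ∃ L : Matrix ι ι ℂ →L[ℂ] (ι → ℂ), ∀ A, L A = A *ᵥ w := by
    refine ⟨LinearMap.toContinuousLinearMap
      { toFun := fun A => A *ᵥ w
        map_add' := fun A B => Matrix.add_mulVec A B w
        map_smul' := fun r A => Matrix.smul_mulVec r A w }, fun A => rfl⟩
  obtain ⟨L, hLdef⟩ := hL
  have hsum : Summable fun k : ℕ => ((k.factorial : ℂ)⁻¹ • (M ^ k)) :=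
    NormedSpace.expSeries_summable' (𝕂 := ℂ) M
  calc NormedSpace.exp M *ᵥ w = L (∑' k : ℕ, ((k.factorial : ℂ)⁻¹ • (M ^ k))) := by
        rw [NormedSpace.exp_eq_tsum (𝕂 := ℂ), hLdef]
    _ = ∑' k : ℕ, L ((k.factorial : ℂ)⁻¹ • (M ^ k)) := L.map_tsum hsum
    _ = _ := by simp only [hLdef]

end Aux

/-- Let `N = A_G ⊗ J_c + I_n ⊗ A_H` be the adjacency matrix of the
lexicographic product `G[H]`, where `A_H·𝟙 = μ·𝟙`. Fix a vertex `a` of `G` and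
`x, y ∈ ℝ^c` with `𝟙ᵀx = 𝟙ᵀy = 0`. If `exp(iτA_H)·x = γ·y` with `τ > 0`,
`|γ| = 1`, then `exp(iτN)·(e_a ⊗ x) = γ·(e_a ⊗ y)`. -/
theorem stmt16 (n c : ℕ)
    (A_G : Matrix (Fin n) (Fin n) ℝ) (hG : A_G.IsSymm)
    (A_H : Matrix (Fin c) (Fin c) ℝ) (hH : A_H.IsSymm)
    (μ : ℝ) (hμ : A_H *ᵥ (fun _ => (1 : ℝ)) = μ • fun _ => (1 : ℝ))
    (N : Matrix (Fin n × Fin c) (Fin n × Fin c) ℝ)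
    (hN : N = A_G ⊗ₖ (Matrix.of fun (_ : Fin c) (_ : Fin c) => (1 : ℝ)) +
      (1 : Matrix (Fin n) (Fin n) ℝ) ⊗ₖ A_H)
    (a : Fin n) (x y : Fin c → ℝ) (hx : ∑ i, x i = 0) (hy : ∑ i, y i = 0)
    (τ : ℝ) (hτ : 0 < τ) (γ : ℂ) (hγ : ‖γ‖ = 1)
    (hPST : U A_H τ *ᵥ (fun u => (x u : ℂ)) = γ • fun u => (y u : ℂ)) :
    U N τ *ᵥ (fun p => if p.1 = a then (x p.2 : ℂ) else 0) =
      γ • fun p => if p.1 = a then (y p.2 : ℂ) else 0 := by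
  classical
  set M : Matrix (Fin n × Fin c) (Fin n × Fin c) ℂ :=
    (Complex.I * (τ : ℂ)) • N.map (Complex.ofReal ·) with hM
  set B : Matrix (Fin c) (Fin c) ℂ :=
    (Complex.I * (τ : ℂ)) • A_H.map (Complex.ofReal ·) with hB
  -- the embedding v ↦ e_a ⊗ v
  set E : (Fin c → ℂ) → (Fin n × Fin c → ℂ) :=
    fun v p => if p.1 = a then v p.2 else 0 with hE
  -- column sums of A_H are μ
  have hcol : ∀ u : Fin c, ∑ s : Fin c, (A_H s u : ℂ) = (μ : ℂ) := by
    intro u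
    have := congrFun hμ u
    simp only [Matrix.mulVec, dotProduct, mul_one, Pi.smul_apply, smul_eq_mul] at this
    have hrow : ∑ s : Fin c, A_H s u = μ := by
      calc ∑ s : Fin c, A_H s u = ∑ s : Fin c, A_H u s := by
            refine Finset.sum_congr rfl fun s _ => ?_
            exact (Matrix.IsSymm.apply hH u s).symm ▸ rfl
        _ = μ := by simpa using this
    rw [← hrow]
    push_cast
    rfl
  -- key single-step intertwining
  have key : ∀ v : Fin c → ℂ, (∑ u, v u) = 0 →
      M *ᵥ E v = E (B *ᵥ v) ∧ (∑ u, (B *ᵥ v) u) = 0 := by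
    intro v hv
    constructor
    · funext p
      obtain ⟨i, s⟩ := p
      simp only [Matrix.mulVec, dotProduct, hE, hM, hN]
      have : ∀ (j : Fin n) (u : Fin c),
          ((Complex.I * (τ : ℂ)) • (A_G ⊗ₖ (Matrix.of fun (_ : Fin c) (_ : Fin c) => (1 : ℝ)) +
            (1 : Matrix (Fin n) (Fin n) ℝ) ⊗ₖ A_H).map (Complex.ofReal ·)) (i, s) (j, u) *
            (if j = a then v u else 0)
          = if j = a then (Complex.I * (τ : ℂ)) *
              (((A_G i a : ℂ)) + (if i = a then (A_H s u : ℂ) else 0)) * v u else 0 := by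
        intro j u
        by_cases hja : j = a
        · subst hja
          simp [Matrix.smul_apply, Matrix.map_apply, Matrix.kroneckerMap_apply,
            Matrix.one_apply, apply_ite, mul_comm, mul_assoc, mul_left_comm]
          ring_nf
          by_cases hia : i = j <;> simp [hia] <;> ring
        · simp [hja]
      rw [Finset.sum_congr rfl fun ju _ => this ju.1 ju.2]
      rw [Fintype.sum_prod_type]
      dsimp only
      rw [Finset.sum_eq_single a (fun j _ hj => by simp [hj]) (by simp)]
      simp only [if_true]
      by_cases hia : i = a
      · subst hia
        simp only [if_pos rfl, if_true]
        have : ∀ u : Fin c, Complex.I * (τ : ℂ) * ((A_G i i : ℂ) + (A_H s u : ℂ)) * v u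
            = Complex.I * (τ : ℂ) * (A_G i i : ℂ) * v u
              + Complex.I * (τ : ℂ) * ((A_H s u : ℂ) * v u) := by intro u; ring
        rw [Finset.sum_congr rfl fun u _ => this u, Finset.sum_add_distrib,
          ← Finset.mul_sum, hv, mul_zero, zero_add, ← Finset.mul_sum]
        simp [hB, Matrix.mulVec, dotProduct, Finset.mul_sum]
        exact Finset.sum_congr rfl fun u _ => by ring
      · simp only [if_neg hia, add_zero]
        rw [← Finset.mul_sum, hv, mul_zero]
    · -- zero-sum preserved
      have : ∑ s : Fin c, (B *ᵥ v) s
          = Complex.I * (τ : ℂ) * ∑ u : Fin c, (∑ s : Fin c, (A_H s u : ℂ)) * v u := by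
        simp only [hB, Matrix.mulVec, dotProduct, Matrix.smul_apply, Matrix.map_apply,
          smul_eq_mul, Finset.mul_sum]
        rw [Finset.sum_comm]
        refine Finset.sum_congr rfl fun u _ => ?_
        rw [Finset.sum_mul, Finset.mul_sum]
        refine Finset.sum_congr rfl fun s _ => by ring
      rw [this]
      have : ∑ u : Fin c, (∑ s : Fin c, (A_H s u : ℂ)) * v u = (μ : ℂ) * ∑ u, v u := by
        rw [Finset.mul_sum]
        exact Finset.sum_congr rfl fun u _ => by rw [hcol u]
      rw [this, hv, mul_zero, mul_zero]
  -- iterated intertwining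
  have iter : ∀ (k : ℕ) (v : Fin c → ℂ), (∑ u, v u) = 0 →
      (M ^ k) *ᵥ E v = E ((B ^ k) *ᵥ v) ∧ (∑ u, ((B ^ k) *ᵥ v) u) = 0 := by
    intro k
    induction k with
    | zero => intro v hv; simp [Matrix.one_mulVec]; exact hv
    | succ k ih =>
      intro v hv
      obtain ⟨h1, h2⟩ := key v hv
      obtain ⟨h3, h4⟩ := ih (B *ᵥ v) h2
      constructor
      · rw [pow_succ, ← Matrix.mulVec_mulVec, h1, h3, Matrix.mulVec_mulVec, ← pow_succ]
      · rw [pow_succ, ← Matrix.mulVec_mulVec] at *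
        exact h4
  -- linearity of E
  have Esmul : ∀ (r : ℂ) (v : Fin c → ℂ), E (r • v) = r • E v := by
    intro r v; funext p; simp only [hE, Pi.smul_apply, smul_eq_mul]
    by_cases h : p.1 = a <;> simp [h]
  -- E is continuous (it is linear on a finite-dimensional space)
  have hxsum : (∑ u, ((x u : ℂ))) = 0 := by
    have : ((∑ u, x u : ℝ) : ℂ) = 0 := by rw [hx]; norm_cast
    simpa [Complex.ofReal_sum] using this
  have hEcont : ∃ L : (Fin c → ℂ) →L[ℂ] (Fin n × Fin c → ℂ), ∀ v, L v = E v := by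
    refine ⟨LinearMap.toContinuousLinearMap
      { toFun := E
        map_add' := fun v w => by
          funext p; simp only [hE, Pi.add_apply]
          by_cases h : p.1 = a <;> simp [h]
        map_smul' := fun r v => by simpa using Esmul r v }, fun v => rfl⟩
  obtain ⟨L, hLdef⟩ := hEcont
  -- main computation
  have main : U N τ *ᵥ E (fun u => (x u : ℂ)) = E (U A_H τ *ᵥ fun u => (x u : ℂ)) := by
    rw [U, U, exp_mulVec, exp_mulVec, ← hM, ← hB]
    have step : ∀ k : ℕ,
        ((k.factorial : ℂ)⁻¹ • (M ^ k)) *ᵥ E (fun u => (x u : ℂ))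
          = L ((k.factorial : ℂ)⁻¹ • ((B ^ k) *ᵥ fun u => (x u : ℂ))) := by
      intro k
      rw [Matrix.smul_mulVec, (iter k _ hxsum).1, L.map_smul, hLdef]
    rw [tsum_congr step]
    have hsumB : Summable (fun k : ℕ =>
        ((k.factorial : ℂ)⁻¹ • ((B ^ k) *ᵥ fun u => (x u : ℂ)))) := by
      have hL2 : ∃ L2 : Matrix (Fin c) (Fin c) ℂ →L[ℂ] (Fin c → ℂ),
          ∀ A, L2 A = A *ᵥ fun u => (x u : ℂ) := by
        refine ⟨LinearMap.toContinuousLinearMap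
          { toFun := fun A => A *ᵥ fun u => (x u : ℂ)
            map_add' := fun A B => Matrix.add_mulVec A B _
            map_smul' := fun r A => Matrix.smul_mulVec r A _ }, fun A => rfl⟩
      obtain ⟨L2, hL2def⟩ := hL2
      letI : NormedRing (Matrix (Fin c) (Fin c) ℂ) := Matrix.linftyOpNormedRing
      letI : NormedAlgebra ℂ (Matrix (Fin c) (Fin c) ℂ) := Matrix.linftyOpNormedAlgebra
      have : Summable fun k : ℕ => ((k.factorial : ℂ)⁻¹ • (B ^ k)) :=
        NormedSpace.expSeries_summable' (𝕂 := ℂ) B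
      have := this.mapL L2
      simpa only [hL2def, Matrix.smul_mulVec] using this
    rw [← L.map_tsum hsumB, hLdef]
    congr 1
    rw [tsum_congr (fun k : ℕ => (Matrix.smul_mulVec
      ((k.factorial : ℂ)⁻¹) (B ^ k) (fun u => (x u : ℂ))).symm)]
  have : U N τ *ᵥ (fun p => if p.1 = a then (x p.2 : ℂ) else 0) = E (γ • fun u => (y u : ℂ)) := by
    rw [← hPST, ← main]
  rw [this, Esmul]
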